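/- Mean-squared-error bound for greedy load balancing (Theorem 4): let L : Fin N → ℝ be the final machine loads produced by the greedy algorithm on a list of nonnegative weights w_1, …, w_F, let L_opt = (∑_{i} w_i)/N, and let w_max = max_{i} w_i. Then the mean squared error of the loads about the ideal uniform load is bounded by the square of the largest weight: (1/N) · ∑_{j} (L j − L_opt)² ≤ w_max². -/

import Mathlib

open Finset

/-- The machine of minimal current load, ties broken by lowest machine index. -/
noncomputable def minIdx {N : ℕ} [NeZero N] (loads : Fin N → ℝ) : Fin N :=
  (Finset.univ.filter fun j => ∀ i, loads j ≤ loads i).min' (by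
    classical
    obtain ⟨j, -, hj⟩ := Finset.exists_min_image (Finset.univ : Finset (Fin N)) loads
      Finset.univ_nonempty
    exact ⟨j, Finset.mem_filter.mpr ⟨Finset.mem_univ j, fun i => hj i (Finset.mem_univ i)⟩⟩)

/-- Final machine loads of the list-scheduling greedy algorithm: process the
weights in list order, starting from all-zero loads, each time adding the weight
to a machine of minimal current cumulative load (lowest index on ties). -/
noncomputable def greedyLoads (N : ℕ) [NeZero N] (ws : List ℝ) : Fin N → ℝ :=
  ws.foldl
    (fun loads w => Function.update loads (minIdx loads) (loads (minIdx loads) + w))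
    (fun _ => 0)

lemma minIdx_le {N : ℕ} [NeZero N] (loads : Fin N → ℝ) (i : Fin N) :
    loads (minIdx loads) ≤ loads i := by
  have h : minIdx loads ∈ Finset.univ.filter fun j => ∀ i, loads j ≤ loads i :=
    Finset.min'_mem _ _
  exact (Finset.mem_filter.mp h).2 i

lemma foldl_sum {N : ℕ} [NeZero N] (ws : List ℝ) : ∀ loads : Fin N → ℝ,
    ∑ j, (ws.foldl
      (fun loads w => Function.update loads (minIdx loads) (loads (minIdx loads) + w))
      loads) j = (∑ j, loads j) + ws.sum := by
  induction ws with
  | nil => intro loads; simp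
  | cons w ws ih =>
    intro loads
    rw [List.foldl_cons, ih, List.sum_cons]
    rw [Finset.sum_update_of_mem (Finset.mem_univ _),
      ← Finset.add_sum_erase _ loads (Finset.mem_univ (minIdx loads)), Finset.erase_eq]
    ring

lemma foldl_spread {N : ℕ} [NeZero N] (M : ℝ) (ws : List ℝ) :
    ∀ loads : Fin N → ℝ, (∀ w ∈ ws, 0 ≤ w ∧ w ≤ M) →
    (∀ j k, loads j ≤ loads k + M) →
    ∀ j k, (ws.foldl
      (fun loads w => Function.update loads (minIdx loads) (loads (minIdx loads) + w))
      loads) j ≤ (ws.foldl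
      (fun loads w => Function.update loads (minIdx loads) (loads (minIdx loads) + w))
      loads) k + M := by
  induction ws with
  | nil => intro loads _ h j k; simpa using h j k
  | cons w ws ih =>
    intro loads hws h j k
    rw [List.foldl_cons]
    obtain ⟨hw0, hwM⟩ := hws w List.mem_cons_self
    refine ih _ (fun v hv => hws v (List.mem_cons_of_mem _ hv)) ?_ j k
    intro j k
    set m := minIdx loads with hm
    by_cases hj : j = m
    · by_cases hk : k = m
      · subst hj; subst hk
        simp only [Function.update_self]
        have : (0:ℝ) ≤ M := le_trans hw0 hwM
        linarith
      · subst hj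
        rw [Function.update_self, Function.update_of_ne hk]
        have := minIdx_le loads k
        linarith
    · rw [Function.update_of_ne hj]
      by_cases hk : k = m
      · subst hk
        rw [Function.update_self]
        have := h j m
        linarith
      · rw [Function.update_of_ne hk]
        exact h j k

lemma le_foldr_max (ws : List ℝ) : ∀ w ∈ ws, w ≤ ws.foldr max 0 := by
  induction ws with
  | nil => simp
  | cons a ws ih =>
    intro w hw
    rcases List.mem_cons.mp hw with rfl | hw
    · exact le_max_left _ _
    · exact le_trans (ih w hw) (le_max_right _ _)

lemma foldr_max_nonneg (ws : List ℝ) : 0 ≤ ws.foldr max 0 := by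
  induction ws with
  | nil => simp
  | cons a ws ih => exact le_trans ih (le_max_right _ _)

/-- Theorem 4: the mean squared error of the greedy loads about the
ideal uniform load `L_opt = (∑ w)/N` is at most `w_max²`. -/
theorem greedy_mse_le (N : ℕ) [NeZero N] (ws : List ℝ)
    (hw : ∀ w ∈ ws, 0 ≤ w) :
    (1 / (N : ℝ)) * ∑ j : Fin N, (greedyLoads N ws j - ws.sum / (N : ℝ)) ^ 2 ≤
      (ws.foldr max 0) ^ 2 := by
  set M := ws.foldr max 0 with hM
  have hM0 : (0:ℝ) ≤ M := foldr_max_nonneg ws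
  set L := greedyLoads N ws with hL
  have hN : (0:ℝ) < (N : ℝ) := by
    have := NeZero.pos N
    exact_mod_cast this
  have hsum : ∑ j, L j = ws.sum := by
    have := foldl_sum (N := N) ws (fun _ => 0)
    simpa [hL, greedyLoads] using this
  have hspread : ∀ j k, L j ≤ L k + M := by
    have := foldl_spread (N := N) M ws (fun _ => 0)
      (fun v hv => ⟨hw v hv, le_foldr_max ws v hv⟩)
      (fun j k => by simpa using hM0)
    simpa [hL, greedyLoads] using this
  have key : ∀ j : Fin N, (L j - ws.sum / (N : ℝ)) ^ 2 ≤ M ^ 2 := by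
    intro j
    have h1 : ws.sum ≤ (N : ℝ) * (L j + M) := by
      rw [← hsum]
      calc ∑ k, L k ≤ ∑ _k : Fin N, (L j + M) :=
            Finset.sum_le_sum fun k _ => hspread k j
        _ = (N : ℝ) * (L j + M) := by rw [Finset.sum_const, Finset.card_univ, Fintype.card_fin, nsmul_eq_mul]
    have h2 : (N : ℝ) * (L j - M) ≤ ws.sum := by
      rw [← hsum]
      calc (N : ℝ) * (L j - M) = ∑ _k : Fin N, (L j - M) := by rw [Finset.sum_const, Finset.card_univ, Fintype.card_fin, nsmul_eq_mul]
        _ ≤ ∑ k, L k := Finset.sum_le_sum fun k _ => by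
            have := hspread j k; linarith
    apply sq_le_sq'
    · have : ws.sum / (N : ℝ) ≤ L j + M := by
        rw [div_le_iff₀ hN] at *
        nlinarith
      linarith
    · have : L j - M ≤ ws.sum / (N : ℝ) := by
        rw [le_div_iff₀ hN]
        nlinarith
      linarith
  calc (1 / (N : ℝ)) * ∑ j : Fin N, (L j - ws.sum / (N : ℝ)) ^ 2
      ≤ (1 / (N : ℝ)) * ∑ _j : Fin N, M ^ 2 := by
        apply mul_le_mul_of_nonneg_left (Finset.sum_le_sum fun j _ => key j)
        positivity
    _ = M ^ 2 := by
        rw [Finset.sum_const, Finset.card_univ, Fintype.card_fin]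
        field_simp
        rw [nsmul_eq_mul]
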